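/- Modified electromagnetic energy balance for the leapfrog Maxwell step (Scheme-II): let Δt ∈ ℝ and let E⁰, E¹, B⁻, B⁰ᐟ², B⁺, J : G → ℝ³ be grid functions (representing E^n, E^{n+1}, B^{n−1/2}, B^{n+1/2}, B^{n+3/2}, J^{n+1/2}) satisfying, for all j ∈ G, B⁰ᐟ²(j) − B⁻(j) = −Δt · (Π E⁰)(j), B⁺(j) − B⁰ᐟ²(j) = −Δt · (Π E¹)(j), and E¹(j) − E⁰(j) = Δt · (Π B⁰ᐟ²)(j) − Δt · J(j). Then ∑_{j∈G} (‖E¹(j)‖² + B⁺(j) · B⁰ᐟ²(j)) − ∑_{j∈G} (‖E⁰(j)‖² + B⁰ᐟ²(j) · B⁻(j)) = −Δt · ∑_{j∈G} J(j) · (E⁰(j) + E¹(j)). -/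
import Mathlib


open scoped BigOperators RealInnerProductSpace

/-- The periodic grid index set `G = ZMod N₁ × ZMod N₂ × ZMod N₃`. -/
abbrev Grid (N₁ N₂ N₃ : ℕ) : Type := ZMod N₁ × ZMod N₂ × ZMod N₃

/-- Shift of a grid index by `k` steps in the `d`-th coordinate direction
(periodic wrap-around). -/
def gshift {N₁ N₂ N₃ : ℕ} (d : Fin 3) (k : ℤ) (j : Grid N₁ N₂ N₃) : Grid N₁ N₂ N₃ :=
  if d = 0 then (j.1 + (k : ZMod N₁), j.2.1, j.2.2)
  else if d = 1 then (j.1, j.2.1 + (k : ZMod N₂), j.2.2)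
  else (j.1, j.2.1, j.2.2 + (k : ZMod N₃))

/-- Central difference of a scalar grid function `S` in direction `d`:
`(D_d S)(j) = (S(j+e_d) − S(j−e_d)) / (2Δx_d)`. -/
noncomputable def Dd {N₁ N₂ N₃ : ℕ} (Δx : Fin 3 → ℝ) (d : Fin 3)
    (S : Grid N₁ N₂ N₃ → ℝ) (j : Grid N₁ N₂ N₃) : ℝ :=
  (S (gshift d 1 j) - S (gshift d (-1) j)) / (2 * Δx d)

/-- Discrete curl `Π` of a vector-valued grid function, built from the
central differences `D_d`. -/
noncomputable def discCurl {N₁ N₂ N₃ : ℕ} (Δx : Fin 3 → ℝ)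
    (S : Grid N₁ N₂ N₃ → EuclideanSpace ℝ (Fin 3)) (j : Grid N₁ N₂ N₃) :
    EuclideanSpace ℝ (Fin 3) :=
  (EuclideanSpace.equiv (Fin 3) ℝ).symm
    ![Dd Δx 1 (fun i => S i 2) j - Dd Δx 2 (fun i => S i 1) j,
      Dd Δx 2 (fun i => S i 0) j - Dd Δx 0 (fun i => S i 2) j,
      Dd Δx 0 (fun i => S i 1) j - Dd Δx 1 (fun i => S i 0) j]

/-- The standard cross product on Euclidean three-space. -/
noncomputable def cross3 (a b : EuclideanSpace ℝ (Fin 3)) : EuclideanSpace ℝ (Fin 3) :=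
  (EuclideanSpace.equiv (Fin 3) ℝ).symm
    ![a 1 * b 2 - a 2 * b 1, a 2 * b 0 - a 0 * b 2, a 0 * b 1 - a 1 * b 0]


section Aux
variable {N₁ N₂ N₃ : ℕ} [NeZero N₁] [NeZero N₂] [NeZero N₃]

lemma gshift_cancel (d : Fin 3) (k : ℤ) (j : Grid N₁ N₂ N₃) :
    gshift d (-k) (gshift d k j) = j := by
  unfold gshift
  split_ifs <;> simp

def gshiftEquiv (d : Fin 3) (k : ℤ) : Grid N₁ N₂ N₃ ≃ Grid N₁ N₂ N₃ where
  toFun := gshift d k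
  invFun := gshift d (-k)
  left_inv j := gshift_cancel d k j
  right_inv j := by simpa using gshift_cancel d (-k) j

lemma sum_shift (d : Fin 3) (k : ℤ) (f : Grid N₁ N₂ N₃ → ℝ) :
    ∑ j, f (gshift d k j) = ∑ j, f j :=
  (gshiftEquiv d k).sum_comp f

lemma sum_Dd_mul (Δx : Fin 3 → ℝ) (d : Fin 3) (S T : Grid N₁ N₂ N₃ → ℝ) :
    ∑ j, Dd Δx d S j * T j = -∑ j, S j * Dd Δx d T j := by
  have h1 : ∑ j, S (gshift d 1 j) * T j = ∑ j, S j * T (gshift d (-1) j) := by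
    rw [← sum_shift d (-1) (fun j => S (gshift d 1 j) * T j)]
    refine Finset.sum_congr rfl fun j _ => ?_
    rw [show gshift d 1 (gshift d (-1) j) = j by simpa using gshift_cancel d (-1) j]
  have h2 : ∑ j, S (gshift d (-1) j) * T j = ∑ j, S j * T (gshift d 1 j) := by
    rw [← sum_shift d 1 (fun j => S (gshift d (-1) j) * T j)]
    refine Finset.sum_congr rfl fun j _ => ?_
    rw [gshift_cancel d 1 j]
  have e1 : ∀ U V : Grid N₁ N₂ N₃ → ℝ, ∑ j, Dd Δx d U j * V j
      = (∑ j, U (gshift d 1 j) * V j) / (2 * Δx d)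
        - (∑ j, U (gshift d (-1) j) * V j) / (2 * Δx d) := by
    intro U V
    rw [Finset.sum_div, Finset.sum_div, ← Finset.sum_sub_distrib]
    refine Finset.sum_congr rfl fun j _ => ?_
    simp [Dd]; ring
  have e2 : ∀ U V : Grid N₁ N₂ N₃ → ℝ, ∑ j, U j * Dd Δx d V j
      = (∑ j, U j * V (gshift d 1 j)) / (2 * Δx d)
        - (∑ j, U j * V (gshift d (-1) j)) / (2 * Δx d) := by
    intro U V
    rw [Finset.sum_div, Finset.sum_div, ← Finset.sum_sub_distrib]
    refine Finset.sum_congr rfl fun j _ => ?_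
    simp [Dd]; ring
  rw [e1, e2, h1, h2]; ring

lemma discCurl_apply0 (Δx : Fin 3 → ℝ) (S : Grid N₁ N₂ N₃ → EuclideanSpace ℝ (Fin 3)) (j) :
    discCurl Δx S j 0 = Dd Δx 1 (fun i => S i 2) j - Dd Δx 2 (fun i => S i 1) j := by
  simp [discCurl, EuclideanSpace.equiv]

lemma discCurl_apply1 (Δx : Fin 3 → ℝ) (S : Grid N₁ N₂ N₃ → EuclideanSpace ℝ (Fin 3)) (j) :
    discCurl Δx S j 1 = Dd Δx 2 (fun i => S i 0) j - Dd Δx 0 (fun i => S i 2) j := by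
  simp [discCurl, EuclideanSpace.equiv]

lemma discCurl_apply2 (Δx : Fin 3 → ℝ) (S : Grid N₁ N₂ N₃ → EuclideanSpace ℝ (Fin 3)) (j) :
    discCurl Δx S j 2 = Dd Δx 0 (fun i => S i 1) j - Dd Δx 1 (fun i => S i 0) j := by
  simp [discCurl, EuclideanSpace.equiv]

lemma sum_inner_discCurl (Δx : Fin 3 → ℝ)
    (A B : Grid N₁ N₂ N₃ → EuclideanSpace ℝ (Fin 3)) :
    ∑ j, ⟪discCurl Δx A j, B j⟫ = ∑ j, ⟪A j, discCurl Δx B j⟫ := by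
  simp only [PiLp.inner_apply, RCLike.inner_apply, conj_trivial, Fin.sum_univ_three,
    discCurl_apply0, discCurl_apply1, discCurl_apply2, sub_mul, mul_sub,
    Finset.sum_add_distrib, Finset.sum_sub_distrib]
  simp only [sum_Dd_mul]
  ring

end Aux

/-- Modified electromagnetic energy balance for the leapfrog Maxwell step
(Scheme-II). -/
theorem schemeII_em_energy_balance
    (N₁ N₂ N₃ : ℕ) [NeZero N₁] [NeZero N₂] [NeZero N₃]
    (Δx : Fin 3 → ℝ) (hΔx : ∀ d, 0 < Δx d) (Δt : ℝ)
    (E0 E1 Bm Bh Bp J : Grid N₁ N₂ N₃ → EuclideanSpace ℝ (Fin 3))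
    (hB1 : ∀ j, Bh j - Bm j = -(Δt • discCurl Δx E0 j))
    (hB2 : ∀ j, Bp j - Bh j = -(Δt • discCurl Δx E1 j))
    (hE : ∀ j, E1 j - E0 j = Δt • discCurl Δx Bh j - Δt • J j) :
    (∑ j : Grid N₁ N₂ N₃, (‖E1 j‖ ^ 2 + ⟪Bp j, Bh j⟫))
      - (∑ j : Grid N₁ N₂ N₃, (‖E0 j‖ ^ 2 + ⟪Bh j, Bm j⟫))
      = -Δt * ∑ j : Grid N₁ N₂ N₃, ⟪J j, E0 j + E1 j⟫ := by
  have adj := fun A B => sum_inner_discCurl (N₁:=N₁) (N₂:=N₂) (N₃:=N₃) Δx A B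
  have step : ∀ j, (‖E1 j‖ ^ 2 + ⟪Bp j, Bh j⟫) - (‖E0 j‖ ^ 2 + ⟪Bh j, Bm j⟫)
      = Δt * ⟪discCurl Δx Bh j, E0 j + E1 j⟫ - Δt * ⟪J j, E0 j + E1 j⟫
        - Δt * ⟪discCurl Δx E0 j, Bh j⟫ - Δt * ⟪discCurl Δx E1 j, Bh j⟫ := by
    intro j
    have hBpm : Bp j - Bm j = -(Δt • discCurl Δx E1 j) + -(Δt • discCurl Δx E0 j) := by
      rw [← hB2 j, ← hB1 j]; abel
    have e1 : ‖E1 j‖ ^ 2 - ‖E0 j‖ ^ 2 = ⟪E1 j - E0 j, E0 j + E1 j⟫ := by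
      rw [← real_inner_self_eq_norm_sq, ← real_inner_self_eq_norm_sq,
        inner_sub_left, inner_add_right, inner_add_right]
      rw [real_inner_comm (E1 j) (E0 j)]
      ring
    have e2 : ⟪Bp j, Bh j⟫ - ⟪Bh j, Bm j⟫ = ⟪Bp j - Bm j, Bh j⟫ := by
      rw [inner_sub_left, real_inner_comm (Bh j) (Bm j)]
    have e3 : ⟪E1 j - E0 j, E0 j + E1 j⟫
        = Δt * ⟪discCurl Δx Bh j, E0 j + E1 j⟫ - Δt * ⟪J j, E0 j + E1 j⟫ := by
      rw [hE j, inner_sub_left, real_inner_smul_left, real_inner_smul_left]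
    have e4 : ⟪Bp j - Bm j, Bh j⟫
        = - (Δt * ⟪discCurl Δx E1 j, Bh j⟫) - Δt * ⟪discCurl Δx E0 j, Bh j⟫ := by
      rw [hBpm, inner_add_left, inner_neg_left, inner_neg_left,
        real_inner_smul_left, real_inner_smul_left]
      ring
    have : (‖E1 j‖ ^ 2 + ⟪Bp j, Bh j⟫) - (‖E0 j‖ ^ 2 + ⟪Bh j, Bm j⟫)
        = (‖E1 j‖ ^ 2 - ‖E0 j‖ ^ 2) + (⟪Bp j, Bh j⟫ - ⟪Bh j, Bm j⟫) := by ring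
    rw [this, e1, e2, e3, e4]; ring
  rw [← Finset.sum_sub_distrib]
  simp only [step, Finset.sum_sub_distrib, ← Finset.mul_sum]
  have hsplit : ∑ j, ⟪discCurl Δx Bh j, E0 j + E1 j⟫
      = ∑ j, ⟪discCurl Δx E0 j, Bh j⟫ + ∑ j, ⟪discCurl Δx E1 j, Bh j⟫ := by
    have : ∑ j, ⟪discCurl Δx Bh j, E0 j + E1 j⟫
        = ∑ j, ⟪discCurl Δx Bh j, E0 j⟫ + ∑ j, ⟪discCurl Δx Bh j, E1 j⟫ := by
      rw [← Finset.sum_add_distrib]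
      exact Finset.sum_congr rfl fun j _ => inner_add_right _ _ _
    rw [this, adj Bh E0, adj Bh E1]
    congr 1 <;> exact Finset.sum_congr rfl fun j _ => real_inner_comm _ _
  rw [hsplit]; ring
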